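/- Exchangeability coverage bound for split conformal prediction: if Z_1,...,Z_m,Z_{m+1} are exchangeable real-valued random variables (e.g., i.i.d.) and q̂ is the ⌈(m+1)(1−α)⌉-th order statistic of Z_1,...,Z_m for α ∈ (0,1) with ⌈(m+1)(1−α)⌉ ≤ m, then P(Z_{m+1} ≤ q̂) ≥ 1 − α. -/

import Mathlib

open MeasureTheory Finset
open scoped ENNReal

/-- The `k`-th smallest value (k ≥ 1) of a finite family of reals, defined as the
least threshold `q` with at least `k` of the values `≤ q`. -/
noncomputable def orderStat {n : ℕ} (k : ℕ) (z : Fin n → ℝ) : ℝ :=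
  sInf {q : ℝ | k ≤ (Finset.univ.filter fun i => z i ≤ q).card}

/-- If strictly fewer than `k` of the values are `< t`, then `t ≤ orderStat k z`. -/
lemma le_orderStat {m k : ℕ} (hk1 : 1 ≤ k) (hkm : k ≤ m) (z : Fin m → ℝ) (t : ℝ)
    (h : (Finset.univ.filter fun i => z i < t).card < k) : t ≤ orderStat k z := by
  have hm : 0 < m := hk1.trans hkm
  have hne : (Finset.univ : Finset (Fin m)).Nonempty := ⟨⟨0, hm⟩, mem_univ _⟩
  apply le_csInf
  · refine ⟨univ.sup' hne z, ?_⟩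
    have hfull : (univ.filter fun i => z i ≤ univ.sup' hne z) = univ :=
      Finset.filter_true_of_mem fun i _ => Finset.le_sup' z (mem_univ i)
    simp only [Set.mem_setOf_eq, hfull, card_univ, Fintype.card_fin]
    exact hkm
  · intro q hq
    by_contra hlt
    push_neg at hlt
    have hsub : (univ.filter fun i => z i ≤ q) ⊆ univ.filter fun i => z i < t := by
      intro i hi
      simp only [mem_filter] at hi ⊢
      exact ⟨hi.1, lt_of_le_of_lt hi.2 hlt⟩
    exact absurd (hq.trans (card_le_card hsub)) (not_le.2 h)

/-- At least `k` of the indices `j` have strict rank `< k`. -/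
lemma count_small_rank {n k : ℕ} (hk : k ≤ n) (x : Fin n → ℝ) :
    k ≤ (Finset.univ.filter fun j =>
      (Finset.univ.filter fun i => x i < x j).card < k).card := by
  rcases Nat.eq_zero_or_pos k with hk0 | hkpos
  · simp [hk0]
  have hn : 0 < n := hkpos.trans_le hk
  set σ := Tuple.sort x with hσ
  have hmono := Tuple.monotone_sort x
  have key : ∀ t : Fin n, (t : ℕ) < k →
      (univ.filter fun i => x i < x (σ t)).card < k := by
    intro t ht
    have hsub : (univ.filter fun i => x i < x (σ t)) ⊆ (Finset.Iio t).image σ := by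
      intro i hi
      simp only [mem_filter] at hi
      rw [Finset.mem_image]
      refine ⟨σ.symm i, ?_, σ.apply_symm_apply i⟩
      rw [Finset.mem_Iio]
      by_contra hts
      push_neg at hts
      have hle : (x ∘ σ) t ≤ (x ∘ σ) (σ.symm i) := hmono hts
      simp only [Function.comp_apply, Equiv.apply_symm_apply] at hle
      exact absurd hi.2 (not_lt.2 hle)
    calc (univ.filter fun i => x i < x (σ t)).card
        ≤ ((Finset.Iio t).image σ).card := card_le_card hsub
      _ ≤ (Finset.Iio t).card := Finset.card_image_le
      _ = (t : ℕ) := Fin.card_Iio t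
      _ < k := ht
  have hmain : (Finset.range k).card ≤ (Finset.univ.filter fun j =>
      (Finset.univ.filter fun i => x i < x j).card < k).card := by
    apply Finset.card_le_card_of_injOn (fun t => σ ⟨t % n, Nat.mod_lt t hn⟩)
    · intro t ht
      rw [Finset.mem_coe, Finset.mem_range] at ht
      have htn : t % n = t := Nat.mod_eq_of_lt (ht.trans_le hk)
      simp only [Finset.mem_coe, mem_filter, mem_univ, true_and]
      exact key ⟨t % n, Nat.mod_lt t hn⟩ (by simp [htn, ht])
    · intro t₁ h₁ t₂ h₂ heq
      rw [Finset.mem_coe, Finset.mem_range] at h₁ h₂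
      have hinj := σ.injective heq
      have h1n : t₁ % n = t₁ := Nat.mod_eq_of_lt (h₁.trans_le hk)
      have h2n : t₂ % n = t₂ := Nat.mod_eq_of_lt (h₂.trans_le hk)
      have hmod : t₁ % n = t₂ % n := Fin.mk.inj_iff.mp hinj
      rwa [h1n, h2n] at hmod
  calc k = (Finset.range k).card := (Finset.card_range k).symm
    _ ≤ _ := hmain

/-- Split-conformal coverage bound from exchangeability: if `Z 0, …, Z m` are
exchangeable and `q̂` is the `⌈(m+1)(1−α)⌉`-th order statistic of the first `m`
variables, then `P(Z m ≤ q̂) ≥ 1 − α`. -/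
theorem conformal_coverage {Ω : Type*} [MeasurableSpace Ω]
    (ℙ : Measure Ω) [IsProbabilityMeasure ℙ]
    (m : ℕ) (Z : Fin (m + 1) → Ω → ℝ) (hZ : ∀ i, Measurable (Z i))
    (hexch : ∀ σ : Equiv.Perm (Fin (m + 1)),
      Measure.map (fun ω i => Z (σ i) ω) ℙ = Measure.map (fun ω i => Z i ω) ℙ)
    (α : ℝ) (hα : α ∈ Set.Ioo (0 : ℝ) 1)
    (hk : ⌈((m : ℝ) + 1) * (1 - α)⌉₊ ≤ m) :
    ENNReal.ofReal (1 - α) ≤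
      ℙ {ω | Z (Fin.last m) ω ≤
        orderStat (⌈((m : ℝ) + 1) * (1 - α)⌉₊)
          (fun i : Fin m => Z i.castSucc ω)} := by
  classical
  obtain ⟨hα0, hα1⟩ := hα
  set k := ⌈((m : ℝ) + 1) * (1 - α)⌉₊ with hkdef
  have hpos : (0 : ℝ) < ((m : ℝ) + 1) * (1 - α) := by
    have h1 : (0:ℝ) < (m : ℝ) + 1 := by positivity
    have h2 : (0:ℝ) < 1 - α := by linarith
    positivity
  have hk1 : 1 ≤ k := Nat.one_le_iff_ne_zero.mpr (by
    intro h0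
    have := Nat.ceil_pos.mpr hpos
    omega)
  -- events
  set S : Fin (m + 1) → Set (Fin (m + 1) → ℝ) := fun j =>
    {x | (univ.filter fun i => x i < x j).card < k} with hSdef
  set Zvec : Ω → Fin (m + 1) → ℝ := fun ω i => Z i ω with hZvec
  have hZvecm : Measurable Zvec := measurable_pi_lambda _ hZ
  have hSmeas : ∀ j, MeasurableSet (S j) := by
    intro j
    have hf : Measurable fun x : Fin (m + 1) → ℝ =>
        ∑ i : Fin (m + 1), if x i < x j then (1 : ℕ) else 0 :=
      Finset.measurable_sum _ fun i _ =>
        Measurable.ite (measurableSet_lt (measurable_pi_apply i) (measurable_pi_apply j))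
          measurable_const measurable_const
    have hset : S j = (fun x : Fin (m + 1) → ℝ =>
        ∑ i : Fin (m + 1), if x i < x j then (1 : ℕ) else 0) ⁻¹' (Set.Iio k) := by
      ext x
      simp [hSdef, Set.mem_preimage, Set.mem_Iio, ← Finset.card_filter]
    rw [hset]
    exact hf measurableSet_Iio
  set B : Fin (m + 1) → Set Ω := fun j => Zvec ⁻¹' (S j) with hBdef
  have hBmeas : ∀ j, MeasurableSet (B j) := fun j => hZvecm (hSmeas j)
  -- all events have equal measure, by exchangeability
  have hBeq : ∀ j, ℙ (B j) = ℙ (B (Fin.last m)) := by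
    intro j
    set σ := Equiv.swap j (Fin.last m) with hσdef
    have hpre : Measurable fun x : Fin (m + 1) → ℝ => x ∘ σ :=
      measurable_pi_lambda _ fun i => measurable_pi_apply (σ i)
    have hre : ∀ (x : Fin (m + 1) → ℝ) (c : ℝ),
        (univ.filter fun i => x (σ i) < c).card = (univ.filter fun i => x i < c).card := by
      intro x c
      rw [Finset.card_filter, Finset.card_filter]
      exact Equiv.sum_comp σ (fun i => if x i < c then 1 else 0)
    have hcomp : S j = (fun x : Fin (m + 1) → ℝ => x ∘ σ) ⁻¹' S (Fin.last m) := by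
      ext x
      simp only [hSdef, Set.mem_preimage, Set.mem_setOf_eq, Function.comp]
      have hc : (univ.filter fun i => x (σ i) < x (σ (Fin.last m))).card
          = (univ.filter fun i => x i < x j).card := by
        rw [show σ (Fin.last m) = j from Equiv.swap_apply_right _ _]
        exact hre x (x j)
      rw [hc]
    calc ℙ (B j) = Measure.map Zvec ℙ (S j) := (Measure.map_apply hZvecm (hSmeas j)).symm
      _ = Measure.map Zvec ℙ ((fun x : Fin (m + 1) → ℝ => x ∘ σ) ⁻¹' S (Fin.last m)) := by
          rw [← hcomp]
      _ = Measure.map (fun x : Fin (m + 1) → ℝ => x ∘ σ) (Measure.map Zvec ℙ)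
            (S (Fin.last m)) := (Measure.map_apply hpre (hSmeas _)).symm
      _ = Measure.map ((fun x : Fin (m + 1) → ℝ => x ∘ σ) ∘ Zvec) ℙ (S (Fin.last m)) := by
          rw [Measure.map_map hpre hZvecm]
      _ = Measure.map Zvec ℙ (S (Fin.last m)) := by
          rw [show ((fun x : Fin (m + 1) → ℝ => x ∘ σ) ∘ Zvec) = fun ω i => Z (σ i) ω from rfl,
            hexch σ]
      _ = ℙ (B (Fin.last m)) := Measure.map_apply hZvecm (hSmeas _)
  -- pointwise counting
  have hpoint : ∀ ω, (k : ℝ≥0∞) ≤ ∑ j, (B j).indicator (fun _ => (1 : ℝ≥0∞)) ω := by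
    intro ω
    have hcount := count_small_rank (n := m + 1) (k := k) (by omega) (fun i => Z i ω)
    have hsum_card : ∑ j, (B j).indicator (fun _ => (1 : ℝ≥0∞)) ω
        = ((univ.filter fun j : Fin (m + 1) => ω ∈ B j).card : ℝ≥0∞) := by
      rw [Finset.card_filter, Nat.cast_sum]
      refine Finset.sum_congr rfl fun j _ => ?_
      by_cases h : ω ∈ B j <;> simp [Set.indicator, h]
    rw [hsum_card]
    have hBmem : ∀ j, (ω ∈ B j) ↔
        (univ.filter fun i => Z i ω < Z j ω).card < k := by
      intro j
      simp [hBdef, hSdef, hZvec, Set.mem_setOf_eq]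
    have : (univ.filter fun j : Fin (m + 1) => ω ∈ B j)
        = univ.filter fun j => (univ.filter fun i => Z i ω < Z j ω).card < k := by
      apply Finset.filter_congr
      intro j _
      exact hBmem j
    rw [this]
    exact_mod_cast hcount
  -- integrate
  have hsum : (k : ℝ≥0∞) ≤ ((m : ℝ≥0∞) + 1) * ℙ (B (Fin.last m)) := by
    have h1 : (k : ℝ≥0∞) ≤ ∑ j, ℙ (B j) := by
      calc (k : ℝ≥0∞) = ∫⁻ (_ω : Ω), (k : ℝ≥0∞) ∂ℙ := by simp
        _ ≤ ∫⁻ ω, ∑ j, (B j).indicator (fun _ => (1 : ℝ≥0∞)) ω ∂ℙ :=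
            lintegral_mono hpoint
        _ = ∑ j, ∫⁻ ω, (B j).indicator (fun _ => (1 : ℝ≥0∞)) ω ∂ℙ :=
            lintegral_finset_sum _ fun j _ => measurable_const.indicator (hBmeas j)
        _ = ∑ j, ℙ (B j) := by
            refine Finset.sum_congr rfl fun j _ => ?_
            exact lintegral_indicator_one (hBmeas j)
    have h2 : ∑ j, ℙ (B j) = ((m : ℝ≥0∞) + 1) * ℙ (B (Fin.last m)) := by
      rw [Finset.sum_congr rfl fun j _ => hBeq j, Finset.sum_const, card_univ,
        Fintype.card_fin]
      simp [nsmul_eq_mul]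
    rw [← h2]; exact h1
  -- the event inclusion
  have hBlast_sub : B (Fin.last m) ⊆ {ω | Z (Fin.last m) ω ≤
      orderStat k (fun i : Fin m => Z i.castSucc ω)} := by
    intro ω hω
    have hωb : (univ.filter fun i : Fin (m + 1) => Z i ω < Z (Fin.last m) ω).card < k := hω
    have hsmall : (univ.filter fun i : Fin m => Z i.castSucc ω < Z (Fin.last m) ω).card
        ≤ (univ.filter fun i : Fin (m + 1) => Z i ω < Z (Fin.last m) ω).card := by
      apply Finset.card_le_card_of_injOn Fin.castSucc
      · intro i hi
        simp only [Finset.mem_coe, mem_filter, mem_univ, true_and] at hi ⊢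
        exact hi
      · exact fun a _ b _ h => Fin.castSucc_injective m h
    exact le_orderStat hk1 hk _ _ (lt_of_le_of_lt hsmall hωb)
  refine le_trans ?_ (measure_mono hBlast_sub)
  -- conclude: ofReal (1 - α) ≤ ℙ (B last)
  have hklb : ((m : ℝ≥0∞) + 1) * ENNReal.ofReal (1 - α) ≤ (k : ℝ≥0∞) := by
    have : ((m : ℝ≥0∞) + 1) * ENNReal.ofReal (1 - α)
        = ENNReal.ofReal (((m : ℝ) + 1) * (1 - α)) := by
      rw [ENNReal.ofReal_mul (by positivity)]
      congr 1
      rw [ENNReal.ofReal_add (by positivity) zero_le_one]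
      simp [ENNReal.ofReal_natCast]
    rw [this]
    calc ENNReal.ofReal (((m : ℝ) + 1) * (1 - α)) ≤ ENNReal.ofReal (k : ℝ) :=
        ENNReal.ofReal_le_ofReal (Nat.le_ceil _)
      _ = (k : ℝ≥0∞) := ENNReal.ofReal_natCast k
  have hcancel : ((m : ℝ≥0∞) + 1) * ENNReal.ofReal (1 - α)
      ≤ ((m : ℝ≥0∞) + 1) * ℙ (B (Fin.last m)) := hklb.trans hsum
  have hne0 : ((m : ℝ≥0∞) + 1) ≠ 0 := by simp
  have hnetop : ((m : ℝ≥0∞) + 1) ≠ ⊤ := by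
    simp [ENNReal.add_ne_top]
  exact (ENNReal.mul_le_mul_iff_right hne0 hnetop).mp hcancel
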